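/- Let G be a graph and H any subgraph of G (not necessarily induced). Then E(G) ≥ 2R(H), where R(H) is the Randić index of H computed with degrees in H. -/

import Mathlib

open Finset Matrix

noncomputable section

variable {V : Type*} [Fintype V] [DecidableEq V]

/-- The adjacency matrix of a simple graph is Hermitian (over ℝ). -/
theorem SimpleGraph.isHermitian_adjMatrix' (G : SimpleGraph V) [DecidableRel G.Adj] :
    (G.adjMatrix ℝ).IsHermitian := by
  rw [Matrix.IsHermitian, Matrix.conjTranspose_eq_transpose_of_trivial]
  exact G.isSymm_adjMatrix

/-- The energy of a graph: the sum of the absolute values of the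
eigenvalues of its adjacency matrix. -/
def SimpleGraph.energy (G : SimpleGraph V) [DecidableRel G.Adj] : ℝ :=
  ∑ k, |G.isHermitian_adjMatrix'.eigenvalues k|

/-- The Randić index of a graph: the sum over the (unordered) edges `(i,j)`
of `1/√(deg i · deg j)`. -/
def SimpleGraph.randic (G : SimpleGraph V) [DecidableRel G.Adj] : ℝ :=
  ∑ e ∈ G.edgeFinset,
    Sym2.lift ⟨fun i j => 1 / Real.sqrt (G.degree i * G.degree j),
      fun i j => by simp [mul_comm]⟩ e

end

/-- Summing a function of edges over all ordered adjacent pairs counts each edge twice. -/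
lemma pair_sum_eq_two_mul {V : Type*} [Fintype V] [DecidableEq V]
    (H : SimpleGraph V) [DecidableRel H.Adj] (f : Sym2 V → ℝ) :
    ∑ u, ∑ v, (if H.Adj u v then f s(u, v) else 0) = 2 * ∑ e ∈ H.edgeFinset, f e := by
  classical
  have h1 : ∑ u, ∑ v, (if H.Adj u v then f s(u, v) else 0)
      = ∑ p ∈ (univ ×ˢ univ : Finset (V × V)).filter (fun p => H.Adj p.1 p.2),
          f s(p.1, p.2) := by
    rw [Finset.sum_filter, Finset.sum_product]
  have hmaps : ∀ p ∈ (univ ×ˢ univ : Finset (V × V)).filter (fun p => H.Adj p.1 p.2),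
      s(p.1, p.2) ∈ H.edgeFinset := by
    rintro ⟨a, b⟩ hp
    simp only [Finset.mem_filter] at hp
    simpa [SimpleGraph.mem_edgeFinset] using hp.2
  rw [h1, ← Finset.sum_fiberwise_of_maps_to hmaps (fun p => f s(p.1, p.2))]
  rw [Finset.mul_sum]
  refine Finset.sum_congr rfl ?_
  intro e he
  induction e with
  | _ a b =>
    have hadj : H.Adj a b := by rwa [SimpleGraph.mem_edgeFinset, SimpleGraph.mem_edgeSet] at he
    have hfib : ((univ ×ˢ univ : Finset (V × V)).filter (fun p => H.Adj p.1 p.2)).filter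
        (fun p => s(p.1, p.2) = s(a, b)) = {(a, b), (b, a)} := by
      ext ⟨u, v⟩
      simp only [Finset.mem_filter, Finset.mem_product, Finset.mem_univ, true_and,
        Finset.mem_insert, Finset.mem_singleton, Prod.mk.injEq]
      constructor
      · rintro ⟨-, heq⟩
        rcases Sym2.eq_iff.mp heq with ⟨rfl, rfl⟩ | ⟨rfl, rfl⟩
        · exact Or.inl ⟨rfl, rfl⟩
        · exact Or.inr ⟨rfl, rfl⟩
      · rintro (⟨rfl, rfl⟩ | ⟨rfl, rfl⟩)
        · exact ⟨hadj, rfl⟩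
        · exact ⟨hadj.symm, Sym2.eq_swap⟩
    rw [hfib, Finset.sum_pair (fun h => hadj.ne (congrArg Prod.fst h))]
    have : (s(b, a) : Sym2 V) = s(a, b) := Sym2.eq_swap
    rw [this]
    ring

/-- For any subgraph `H` of `G` (not necessarily induced), `E(G) ≥ 2 R(H)`,
where the Randić index of `H` is computed with degrees in `H`. -/
theorem stmt4 {V : Type*} [Fintype V] [DecidableEq V]
    (G H : SimpleGraph V) [DecidableRel G.Adj] [DecidableRel H.Adj]
    (hHG : H ≤ G) :
    2 * H.randic ≤ G.energy := by
  classical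
  have hA := G.isHermitian_adjMatrix'
  set U : Matrix V V ℝ := (Matrix.IsHermitian.eigenvectorUnitary hA : Matrix V V ℝ) with hUdef
  set lam : V → ℝ := hA.eigenvalues with hlamdef
  -- entrywise spectral theorem
  have hAentry : ∀ u v : V, G.adjMatrix ℝ u v = ∑ k, U u k * (lam k * U v k) := by
    intro u v
    conv_lhs => rw [hA.spectral_theorem, Unitary.conjStarAlgAut_apply]
    simp only [hUdef, hlamdef, Matrix.mul_apply, Matrix.star_apply, Matrix.diagonal_apply,
      ite_mul, zero_mul, mul_ite, mul_zero, Finset.sum_ite_eq', Finset.sum_ite_eq,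
      Finset.mem_univ, if_true, RCLike.star_def, Matrix.IsHermitian.eigenvectorUnitary_apply]
    simp only [Function.comp, RCLike.ofReal_real_eq_id, id_eq, starRingEnd_apply, star_trivial]
    exact Finset.sum_congr rfl fun k _ => by ring
  -- columns of U are unit vectors
  have hcol : ∀ k, ∑ v, U v k * U v k = 1 := by
    intro k
    have h := ((Matrix.IsHermitian.eigenvectorUnitary hA).2).1
    have h2 := congrFun (congrFun (congrArg (fun M : Matrix V V ℝ => M) h) k) k
    simpa [hUdef, Matrix.mul_apply, Matrix.star_apply, Matrix.one_apply] using h2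
  -- the energy of a vertex
  set Ev : V → ℝ := fun v => ∑ k, |lam k| * U v k ^ 2 with hEvdef
  have hEvnonneg : ∀ v, 0 ≤ Ev v := fun v => Finset.sum_nonneg fun k _ => by positivity
  have hEvsum : ∑ v, Ev v = G.energy := by
    show ∑ v, ∑ k, |lam k| * U v k ^ 2 = _
    rw [Finset.sum_comm]
    show ∑ k, ∑ v, |lam k| * U v k ^ 2 = ∑ k, |G.isHermitian_adjMatrix'.eigenvalues k|
    refine Finset.sum_congr rfl fun k _ => ?_
    rw [← Finset.mul_sum]
    have h1 : ∑ v, U v k ^ 2 = 1 := by simpa [sq] using hcol k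
    rw [h1, mul_one]
  -- key inequality: for adjacent vertices, 1 ≤ √(Ev u) √(Ev v)
  have key : ∀ u v : V, G.Adj u v → (1 : ℝ) ≤ Real.sqrt (Ev u) * Real.sqrt (Ev v) := by
    intro u v huv
    have h1 : G.adjMatrix ℝ u v = 1 := by simp [huv]
    calc (1 : ℝ) = G.adjMatrix ℝ u v := h1.symm
      _ ≤ |G.adjMatrix ℝ u v| := le_abs_self _
      _ = |∑ k, U u k * (lam k * U v k)| := by rw [hAentry u v]
      _ ≤ ∑ k, |U u k * (lam k * U v k)| := Finset.abs_sum_le_sum_abs _ _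
      _ = ∑ k, (Real.sqrt |lam k| * |U u k|) * (Real.sqrt |lam k| * |U v k|) := by
          refine Finset.sum_congr rfl fun k _ => ?_
          rw [abs_mul, abs_mul]
          have h2 : Real.sqrt |lam k| * Real.sqrt |lam k| = |lam k| :=
            Real.mul_self_sqrt (abs_nonneg _)
          linear_combination (-(|U u k| * |U v k|)) * h2
      _ ≤ Real.sqrt (∑ k, (Real.sqrt |lam k| * |U u k|) ^ 2) *
            Real.sqrt (∑ k, (Real.sqrt |lam k| * |U v k|) ^ 2) :=
          Real.sum_mul_le_sqrt_mul_sqrt _ _ _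
      _ = Real.sqrt (Ev u) * Real.sqrt (Ev v) := by
          congr 2 <;>
          · refine Finset.sum_congr rfl fun k _ => ?_
            rw [mul_pow, Real.sq_sqrt (abs_nonneg _), sq_abs]
  -- the per-edge bound
  have edge : ∀ u v : V, H.Adj u v →
      1 / Real.sqrt ((H.degree u * H.degree v : ℕ) : ℝ) ≤
        Ev u / (2 * H.degree u) + Ev v / (2 * H.degree v) := by
    intro u v huv
    have hdu : 0 < (H.degree u : ℝ) := by
      have := (H.degree_pos_iff_exists_adj u).mpr ⟨v, huv⟩
      exact_mod_cast this
    have hdv : 0 < (H.degree v : ℝ) := by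
      have := (H.degree_pos_iff_exists_adj v).mpr ⟨u, huv.symm⟩
      exact_mod_cast this
    have h1 := key u v (hHG huv)
    set a := Real.sqrt (Ev u) / Real.sqrt (H.degree u) with ha
    set b := Real.sqrt (Ev v) / Real.sqrt (H.degree v) with hb
    have hsq : Real.sqrt ((H.degree u * H.degree v : ℕ) : ℝ)
        = Real.sqrt (H.degree u) * Real.sqrt (H.degree v) := by
      push_cast
      exact Real.sqrt_mul (le_of_lt hdu) _
    have hsu : 0 < Real.sqrt (H.degree u) := Real.sqrt_pos.mpr hdu
    have hsv : 0 < Real.sqrt (H.degree v) := Real.sqrt_pos.mpr hdv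
    have step1 : 1 / Real.sqrt ((H.degree u * H.degree v : ℕ) : ℝ) ≤ a * b := by
      rw [hsq, ha, hb, div_mul_div_comm]
      exact div_le_div_of_nonneg_right h1 (mul_pos hsu hsv).le
    have step2 : a * b ≤ (a ^ 2 + b ^ 2) / 2 := by nlinarith [sq_nonneg (a - b)]
    have ha2 : a ^ 2 = Ev u / (H.degree u) := by
      rw [ha, div_pow, Real.sq_sqrt (hEvnonneg u), Real.sq_sqrt (le_of_lt hdu)]
    have hb2 : b ^ 2 = Ev v / (H.degree v) := by
      rw [hb, div_pow, Real.sq_sqrt (hEvnonneg v), Real.sq_sqrt (le_of_lt hdv)]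
    calc 1 / Real.sqrt ((H.degree u * H.degree v : ℕ) : ℝ) ≤ a * b := step1
      _ ≤ (a ^ 2 + b ^ 2) / 2 := step2
      _ = Ev u / (2 * H.degree u) + Ev v / (2 * H.degree v) := by
          rw [ha2, hb2]; field_simp
  -- rewrite 2 * randic as a double sum
  have hrandic : 2 * H.randic = ∑ u, ∑ v,
      (if H.Adj u v then 1 / Real.sqrt ((H.degree u * H.degree v : ℕ) : ℝ) else 0) := by
    rw [SimpleGraph.randic, ← pair_sum_eq_two_mul]
    refine Finset.sum_congr rfl fun u _ => Finset.sum_congr rfl fun v _ => ?_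
    by_cases h : H.Adj u v <;> simp [h]
  rw [hrandic, ← hEvsum]
  calc ∑ u, ∑ v, (if H.Adj u v then 1 / Real.sqrt ((H.degree u * H.degree v : ℕ) : ℝ) else 0)
      ≤ ∑ u, ∑ v, (if H.Adj u v then Ev u / (2 * H.degree u) + Ev v / (2 * H.degree v) else 0) := by
        refine Finset.sum_le_sum fun u _ => Finset.sum_le_sum fun v _ => ?_
        by_cases h : H.Adj u v
        · simpa [h] using edge u v h
        · simp [h]
    _ = (∑ u, ∑ v, (if H.Adj u v then Ev u / (2 * H.degree u) else 0))
        + ∑ u, ∑ v, (if H.Adj u v then Ev v / (2 * H.degree v) else 0) := by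
        rw [← Finset.sum_add_distrib]
        refine Finset.sum_congr rfl fun u _ => ?_
        rw [← Finset.sum_add_distrib]
        refine Finset.sum_congr rfl fun v _ => ?_
        by_cases h : H.Adj u v <;> simp [h]
    _ = 2 * ∑ u, ∑ v, (if H.Adj u v then Ev u / (2 * H.degree u) else 0) := by
        have : ∑ u, ∑ v, (if H.Adj u v then Ev v / (2 * H.degree v) else 0)
            = ∑ u, ∑ v, (if H.Adj u v then Ev u / (2 * H.degree u) else 0) := by
          rw [Finset.sum_comm]
          refine Finset.sum_congr rfl fun u _ => Finset.sum_congr rfl fun v _ => ?_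
          simp only [SimpleGraph.adj_comm]
        rw [this]; ring
    _ = ∑ u, 2 * ((H.degree u : ℝ) * (Ev u / (2 * H.degree u))) := by
        rw [Finset.mul_sum]
        refine Finset.sum_congr rfl fun u _ => ?_
        have : ∑ v, (if H.Adj u v then Ev u / (2 * H.degree u) else 0)
            = (H.degree u : ℝ) * (Ev u / (2 * H.degree u)) := by
          rw [← Finset.sum_filter, Finset.sum_const, ← SimpleGraph.neighborFinset_eq_filter]
          rw [SimpleGraph.card_neighborFinset_eq_degree, nsmul_eq_mul]
        rw [this]
    _ ≤ ∑ u, Ev u := by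
        refine Finset.sum_le_sum fun u _ => ?_
        rcases eq_or_ne (H.degree u) 0 with h0 | h0
        · simpa [h0] using hEvnonneg u
        · have hdu : (H.degree u : ℝ) ≠ 0 := Nat.cast_ne_zero.mpr h0
          have : 2 * ((H.degree u : ℝ) * (Ev u / (2 * H.degree u))) = Ev u := by
            field_simp
          rw [this]
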